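/- Let P be the threefold product of the standard Gaussian measure N(0,1) on ℝ. Then the pushforward of P under the map x ↦ x₁²/(x₁² + x₂² + x₃²) (defined arbitrarily at x = 0) is the measure on ℝ with density u ↦ 1/(2·√u) with respect to Lebesgue measure restricted to (0, 1], i.e., the Beta(1/2, 1) distribution. -/

import Mathlib

open MeasureTheory ProbabilityTheory


namespace GaussBetaAux
open Real Set Filter Topology

lemma gaussianPDFReal_zero_one (x : ℝ) :
    gaussianPDFReal 0 1 x = (Real.sqrt (2 * π))⁻¹ * Real.exp (-x ^ 2 / 2) := by
  simp [gaussianPDFReal]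

lemma integral_Ioi_mul_exp (a : ℝ) :
    ∫ r in Ioi a, r * Real.exp (-r ^ 2 / 2) = Real.exp (-a ^ 2 / 2) := by
  have hderiv : ∀ x ∈ Ici a, HasDerivAt (fun r : ℝ => -Real.exp (-r ^ 2 / 2))
      (x * Real.exp (-x ^ 2 / 2)) x := by
    intro x _
    have h1 : HasDerivAt (fun r : ℝ => -r ^ 2 / 2) (-x) x := by
      have := ((hasDerivAt_pow 2 x).neg).div_const 2
      refine this.congr_deriv ?_
      norm_num
      ring
    have h2 := (h1.exp).neg
    refine h2.congr_deriv ?_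
    ring
  have hint : IntegrableOn (fun x : ℝ => x * Real.exp (-x ^ 2 / 2)) (Ioi a) := by
    have : (fun x : ℝ => x * Real.exp (-x ^ 2 / 2))
        = fun x : ℝ => x * Real.exp (-(1/2) * x ^ 2) := by
      funext x; rw [show -x ^ 2 / 2 = -(1/2) * x ^ 2 by ring]
    rw [this]
    exact (integrable_mul_exp_neg_mul_sq (by norm_num)).integrableOn
  have htend : Tendsto (fun r : ℝ => -Real.exp (-r ^ 2 / 2)) atTop (𝓝 0) := by
    rw [show (0:ℝ) = -0 by ring]
    apply Tendsto.neg
    apply Real.tendsto_exp_atBot.comp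
    have h3 : Tendsto (fun r : ℝ => r ^ 2 / 2) atTop atTop :=
      (tendsto_pow_atTop (by norm_num)).atTop_div_const (by norm_num)
    have := tendsto_neg_atBot_iff.mpr h3
    simpa [neg_div] using this
  have := integral_Ioi_of_hasDerivAt_of_tendsto' hderiv hint htend
  rw [this]
  simp


lemma gauss_prod :
    (gaussianReal 0 1).prod (gaussianReal 0 1)
      = (volume.prod volume).withDensity
          (fun p : ℝ × ℝ => ENNReal.ofReal (gaussianPDFReal 0 1 p.1 * gaussianPDFReal 0 1 p.2)) := by
  refine Measure.prod_eq fun s t hs ht => ?_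
  rw [withDensity_apply _ (hs.prod ht), ← Measure.prod_restrict]
  have h1 : ∀ p : ℝ × ℝ, ENNReal.ofReal (gaussianPDFReal 0 1 p.1 * gaussianPDFReal 0 1 p.2)
      = ENNReal.ofReal (gaussianPDFReal 0 1 p.1) * ENNReal.ofReal (gaussianPDFReal 0 1 p.2) :=
    fun p => ENNReal.ofReal_mul (gaussianPDFReal_nonneg 0 1 p.1)
  simp_rw [h1]
  rw [lintegral_prod_mul ((measurable_gaussianPDFReal 0 1).ennreal_ofReal.aemeasurable)
    ((measurable_gaussianPDFReal 0 1).ennreal_ofReal.aemeasurable)]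
  rw [gaussianReal_apply 0 one_ne_zero s, gaussianReal_apply 0 one_ne_zero t]
  rfl

lemma prod_sq_ge {c : ℝ} (hc : 0 ≤ c) :
    ((gaussianReal 0 1).prod (gaussianReal 0 1)) {p : ℝ × ℝ | c ≤ p.1 ^ 2 + p.2 ^ 2}
      = ENNReal.ofReal (Real.exp (-c / 2)) := by
  have hS : MeasurableSet {p : ℝ × ℝ | c ≤ p.1 ^ 2 + p.2 ^ 2} :=
    measurableSet_le measurable_const (by fun_prop)
  set G : ℝ × ℝ → ℝ := fun p => gaussianPDFReal 0 1 p.1 * gaussianPDFReal 0 1 p.2 with hG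
  have hg : Integrable (gaussianPDFReal 0 1) volume := integrable_gaussianPDFReal 0 1
  have hint : IntegrableOn G {p : ℝ × ℝ | c ≤ p.1 ^ 2 + p.2 ^ 2} (volume.prod volume) :=
    (hg.mul_prod hg).integrableOn
  have hnn : (0 : ℝ × ℝ → ℝ) ≤ᵐ[(volume.prod volume).restrict {p : ℝ × ℝ | c ≤ p.1 ^ 2 + p.2 ^ 2}] G :=
    Filter.Eventually.of_forall fun p =>
      mul_nonneg (gaussianPDFReal_nonneg 0 1 p.1) (gaussianPDFReal_nonneg 0 1 p.2)
  rw [gauss_prod, withDensity_apply _ hS, ← ofReal_integral_eq_lintegral_ofReal hint hnn]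
  congr 1
  rw [← integral_indicator hS, ← Measure.volume_eq_prod, ← integral_comp_polarCoord_symm
    (Set.indicator {p : ℝ × ℝ | c ≤ p.1 ^ 2 + p.2 ^ 2} G)]
  have hcongr : ∀ p ∈ polarCoord.target,
      p.1 • (Set.indicator {p : ℝ × ℝ | c ≤ p.1 ^ 2 + p.2 ^ 2} G (polarCoord.symm p))
        = Set.indicator (Ici (Real.sqrt c)) (fun r => r * ((2 * π)⁻¹ * Real.exp (-r ^ 2 / 2))) p.1 := by
    rintro ⟨r, θ⟩ hp
    simp only [polarCoord_target, mem_prod, mem_Ioi] at hp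
    have hr : 0 < r := hp.1
    have hval : (r * Real.cos θ) ^ 2 + (r * Real.sin θ) ^ 2 = r ^ 2 := by
      rw [mul_pow, mul_pow, ← mul_add, Real.cos_sq_add_sin_sq, mul_one]
    by_cases h : c ≤ r ^ 2
    · have hmem : polarCoord.symm (r, θ) ∈ {p : ℝ × ℝ | c ≤ p.1 ^ 2 + p.2 ^ 2} := by
        simp only [polarCoord_symm_apply, mem_setOf_eq, hval]
        exact h
      have hmem2 : r ∈ Ici (Real.sqrt c) := by
        rw [mem_Ici, show r = Real.sqrt (r ^ 2) by rw [Real.sqrt_sq hr.le]]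
        exact Real.sqrt_le_sqrt h
      rw [Set.indicator_of_mem hmem, Set.indicator_of_mem hmem2]
      simp only [polarCoord_symm_apply, hG, gaussianPDFReal_zero_one]
      rw [smul_eq_mul]
      have : (Real.sqrt (2 * π))⁻¹ * Real.exp (-(r * Real.cos θ) ^ 2 / 2)
          * ((Real.sqrt (2 * π))⁻¹ * Real.exp (-(r * Real.sin θ) ^ 2 / 2))
            = (2 * π)⁻¹ * Real.exp (-r ^ 2 / 2) := by
        rw [show (Real.sqrt (2 * π))⁻¹ * Real.exp (-(r * Real.cos θ) ^ 2 / 2)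
          * ((Real.sqrt (2 * π))⁻¹ * Real.exp (-(r * Real.sin θ) ^ 2 / 2))
            = ((Real.sqrt (2 * π))⁻¹ * (Real.sqrt (2 * π))⁻¹)
              * (Real.exp (-(r * Real.cos θ) ^ 2 / 2) * Real.exp (-(r * Real.sin θ) ^ 2 / 2)) by ring]
        rw [← mul_inv, Real.mul_self_sqrt (by positivity), ← Real.exp_add]
        congr 1
        rw [← add_div, ← neg_add, hval]
      rw [this]
    · have hmem : polarCoord.symm (r, θ) ∉ {p : ℝ × ℝ | c ≤ p.1 ^ 2 + p.2 ^ 2} := by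
        simp only [polarCoord_symm_apply, mem_setOf_eq, hval]
        exact h
      have hmem2 : r ∉ Ici (Real.sqrt c) := by
        rw [mem_Ici]
        intro hle
        exact h (by calc c = Real.sqrt c ^ 2 := (Real.sq_sqrt hc).symm
          _ ≤ r ^ 2 := by gcongr)
      rw [Set.indicator_of_notMem hmem, Set.indicator_of_notMem hmem2, smul_zero]
  rw [setIntegral_congr_fun (by exact polarCoord.open_target.measurableSet) hcongr]
  rw [polarCoord_target, Measure.volume_eq_prod, ← Measure.prod_restrict]
  have := MeasureTheory.integral_prod_mul (μ := volume.restrict (Ioi (0:ℝ)))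
    (ν := volume.restrict (Ioo (-π) π))
    (f := fun r => Set.indicator (Ici (Real.sqrt c)) (fun r => r * ((2 * π)⁻¹ * Real.exp (-r ^ 2 / 2))) r)
    (g := fun _ : ℝ => (1 : ℝ))
  simp only [mul_one] at this
  rw [this]
  rw [integral_const]
  have hrw : ∀ x : ℝ, x * ((2 * π)⁻¹ * Real.exp (-x ^ 2 / 2))
      = (2 * π)⁻¹ * (x * Real.exp (-x ^ 2 / 2)) := fun x => by ring
  have hset : (volume : Measure ℝ).restrict (Ici (Real.sqrt c) ∩ Ioi 0)
      = (volume : Measure ℝ).restrict (Ioi (Real.sqrt c)) := by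
    apply Measure.restrict_congr_set
    rw [MeasureTheory.ae_eq_set]
    constructor
    · refine measure_mono_null (fun x hx => ?_) (Real.volume_singleton (a := Real.sqrt c))
      rcases hx with ⟨⟨h1, _⟩, h2⟩
      simp only [mem_Ioi, not_lt] at h2
      exact le_antisymm h2 h1
    · refine measure_mono_null (fun x hx => ?_) (measure_empty (μ := volume))
      rcases hx with ⟨h1, h2⟩
      exfalso
      exact h2 ⟨Set.mem_Ici.mpr (le_of_lt h1), lt_of_le_of_lt (Real.sqrt_nonneg c) h1⟩
  rw [integral_indicator measurableSet_Ici, Measure.restrict_restrict measurableSet_Ici, hset]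
  simp_rw [hrw]
  rw [MeasureTheory.integral_const_mul, integral_Ioi_mul_exp, Real.sq_sqrt hc,
    measureReal_restrict_apply_univ, Real.volume_real_Ioo_of_le (by linarith [Real.pi_pos]), smul_eq_mul, mul_one,
    show π - -π = 2 * π by ring]
  have hπ : (π : ℝ) ≠ 0 := Real.pi_ne_zero
  field_simp


lemma lint_exp {b : ℝ} (hb : 0 ≤ b) :
    ∫⁻ x, ENNReal.ofReal (Real.exp (-b * x ^ 2)) ∂(gaussianReal 0 1)
      = ENNReal.ofReal ((Real.sqrt (2 * b + 1))⁻¹) := by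
  have hb2 : (0 : ℝ) < b + 1/2 := by linarith
  rw [gaussianReal_of_var_ne_zero 0 one_ne_zero,
    lintegral_withDensity_eq_lintegral_mul _ (measurable_gaussianPDF 0 1) (by fun_prop)]
  have h1 : ∀ x : ℝ, (gaussianPDF 0 1 * fun x => ENNReal.ofReal (Real.exp (-b * x ^ 2))) x
      = ENNReal.ofReal ((Real.sqrt (2 * π))⁻¹ * Real.exp (-(b + 1/2) * x ^ 2)) := by
    intro x
    simp only [Pi.mul_apply, gaussianPDF, ← ENNReal.ofReal_mul (gaussianPDFReal_nonneg 0 1 x),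
      gaussianPDFReal_zero_one]
    rw [← ENNReal.ofReal_mul (by positivity)]
    congr 1
    rw [mul_assoc, ← Real.exp_add]
    congr 1
    ring
  simp_rw [h1]
  have hint : Integrable (fun x : ℝ => (Real.sqrt (2 * π))⁻¹ * Real.exp (-(b + 1/2) * x ^ 2)) :=
    (integrable_exp_neg_mul_sq hb2).const_mul _
  rw [← ofReal_integral_eq_lintegral_ofReal hint
    (Filter.Eventually.of_forall fun x => by positivity)]
  rw [MeasureTheory.integral_const_mul, integral_gaussian]
  congr 1
  have hπ : Real.sqrt π ≠ 0 := ne_of_gt (Real.sqrt_pos.mpr Real.pi_pos)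
  have h2 : Real.sqrt 2 ≠ 0 := ne_of_gt (Real.sqrt_pos.mpr (by norm_num))
  have h3 : Real.sqrt (b + 1/2) ≠ 0 := ne_of_gt (Real.sqrt_pos.mpr hb2)
  rw [show (2 * b + 1 : ℝ) = 2 * (b + 1/2) by ring, Real.sqrt_mul (by norm_num) (b + 1/2),
    Real.sqrt_mul (by norm_num) π, Real.sqrt_div Real.pi_pos.le]
  field_simp

lemma rhs_key {t : ℝ} (ht : 0 < t) :
    ∫⁻ u in Ioc 0 t, ENNReal.ofReal (1 / (2 * Real.sqrt u))
      = ENNReal.ofReal (Real.sqrt t) := by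
  have hint0 : IntegrableOn (fun u : ℝ => u ^ (-(1/2) : ℝ) / 2) (Ioc 0 t) := by
    have := (intervalIntegral.intervalIntegrable_rpow' (a := 0) (b := t)
      (r := -(1/2)) (by norm_num))
    rw [intervalIntegrable_iff_integrableOn_Ioc_of_le ht.le] at this
    exact this.div_const 2
  have heq : ∀ u ∈ Ioc (0:ℝ) t, 1 / (2 * Real.sqrt u) = u ^ (-(1/2) : ℝ) / 2 := by
    intro u hu
    rw [Real.rpow_neg hu.1.le, Real.sqrt_eq_rpow]
    rw [one_div, mul_inv, div_eq_mul_inv, mul_comm]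
    ring
  have hint : IntegrableOn (fun u : ℝ => 1 / (2 * Real.sqrt u)) (Ioc 0 t) := by
    refine hint0.congr_fun (fun u hu => (heq u hu).symm) measurableSet_Ioc
  rw [← ofReal_integral_eq_lintegral_ofReal hint
    (Filter.Eventually.of_forall fun u => by positivity)]
  congr 1
  rw [setIntegral_congr_fun measurableSet_Ioc heq]
  rw [← intervalIntegral.integral_of_le ht.le]
  rw [intervalIntegral.integral_div]
  rw [integral_rpow (Or.inl (by norm_num))]
  rw [Real.zero_rpow (by norm_num)]
  rw [Real.sqrt_eq_rpow]
  ring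


lemma measurePreserving_fin3 :
    MeasurePreserving (fun x : Fin 3 → ℝ => (x 0, (x 1, x 2)))
      (Measure.pi fun _ : Fin 3 => gaussianReal 0 1)
      ((gaussianReal 0 1).prod ((gaussianReal 0 1).prod (gaussianReal 0 1))) := by
  have h1 := measurePreserving_piFinSuccAbove (fun _ : Fin 3 => gaussianReal 0 1) 0
  have h2 := measurePreserving_piFinTwo (fun _ : Fin 2 => gaussianReal 0 1)
  have h3 := (MeasurePreserving.id (gaussianReal 0 1)).prod h2
  have h4 := h3.comp h1
  have hfun : (Prod.map id (MeasurableEquiv.piFinTwo fun _ : Fin 2 => ℝ))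
      ∘ (MeasurableEquiv.piFinSuccAbove (fun _ : Fin 3 => ℝ) 0)
      = fun x : Fin 3 → ℝ => (x 0, (x 1, x 2)) := by
    funext x
    simp only [Function.comp_apply, MeasurableEquiv.piFinSuccAbove_apply,
      MeasurableEquiv.piFinTwo_apply, Prod.map_apply, id_eq]
    refine Prod.ext rfl (Prod.ext ?_ ?_) <;> rfl
  rwa [hfun] at h4

end GaussBetaAux


open GaussBetaAux

/-- Beta–Gamma step of Archimedes' theorem: if `(N₁, N₂, N₃)` are i.i.d.
standard Gaussians, then `N₁² / (N₁² + N₂² + N₃²)` has the `Beta(1/2, 1)`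
distribution, i.e. density `u ↦ 1/(2√u)` w.r.t. Lebesgue measure on `(0, 1]`. -/
theorem gaussian_square_ratio_beta :
    (Measure.pi (fun _ : Fin 3 => gaussianReal 0 1)).map
        (fun x => (x 0) ^ 2 / ((x 0) ^ 2 + (x 1) ^ 2 + (x 2) ^ 2)) =
      ((volume : Measure ℝ).restrict (Set.Ioc 0 1)).withDensity
        (fun u => ENNReal.ofReal (1 / (2 * Real.sqrt u))) := by
  have hf : Measurable fun x : Fin 3 → ℝ =>
      (x 0) ^ 2 / ((x 0) ^ 2 + (x 1) ^ 2 + (x 2) ^ 2) := by fun_prop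
  have hmp := measurePreserving_fin3
  set μ3 := Measure.pi (fun _ : Fin 3 => gaussianReal 0 1) with hμ3
  -- main event computation for 0 < t ≤ 1
  have hIic : ∀ t : ℝ, 0 < t → t ≤ 1 →
      μ3 {x : Fin 3 → ℝ | (x 0) ^ 2 / ((x 0) ^ 2 + (x 1) ^ 2 + (x 2) ^ 2) ≤ t}
        = ENNReal.ofReal (Real.sqrt t) := by
    intro t ht ht1
    have htne : t ≠ 0 := ht.ne'
    have hB : MeasurableSet {p : ℝ × ℝ × ℝ | (1 - t) * p.1 ^ 2 ≤ t * (p.2.1 ^ 2 + p.2.2 ^ 2)} := by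
      apply measurableSet_le <;> fun_prop
    have hpre : {x : Fin 3 → ℝ | (x 0) ^ 2 / ((x 0) ^ 2 + (x 1) ^ 2 + (x 2) ^ 2) ≤ t}
        = (fun x : Fin 3 → ℝ => (x 0, (x 1, x 2))) ⁻¹'
          {p : ℝ × ℝ × ℝ | (1 - t) * p.1 ^ 2 ≤ t * (p.2.1 ^ 2 + p.2.2 ^ 2)} := by
      ext x
      simp only [Set.mem_setOf_eq, Set.mem_preimage]
      have hS : 0 ≤ (x 0) ^ 2 + (x 1) ^ 2 + (x 2) ^ 2 := by positivity
      rcases eq_or_lt_of_le hS with hS0 | hSpos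
      · have h0 : x 0 = 0 := by nlinarith [sq_nonneg (x 0), sq_nonneg (x 1), sq_nonneg (x 2)]
        have h1 : x 1 = 0 := by nlinarith [sq_nonneg (x 0), sq_nonneg (x 1), sq_nonneg (x 2)]
        have h2 : x 2 = 0 := by nlinarith [sq_nonneg (x 0), sq_nonneg (x 1), sq_nonneg (x 2)]
        simp [h0, h1, h2, ht.le]
      · rw [div_le_iff₀ hSpos]
        constructor <;> intro h <;> nlinarith
    rw [hpre, hmp.measure_preimage hB.nullMeasurableSet, Measure.prod_apply hB]
    have hslice : ∀ y : ℝ,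
        (Prod.mk y ⁻¹' {p : ℝ × ℝ × ℝ | (1 - t) * p.1 ^ 2 ≤ t * (p.2.1 ^ 2 + p.2.2 ^ 2)})
          = {q : ℝ × ℝ | (1 - t) * y ^ 2 / t ≤ q.1 ^ 2 + q.2 ^ 2} := by
      intro y
      ext q
      simp only [Set.mem_preimage, Set.mem_setOf_eq]
      rw [div_le_iff₀ ht, mul_comm (q.1 ^ 2 + q.2 ^ 2) t]
    simp_rw [hslice]
    have hcalc : ∀ y : ℝ, ((gaussianReal 0 1).prod (gaussianReal 0 1))
        {q : ℝ × ℝ | (1 - t) * y ^ 2 / t ≤ q.1 ^ 2 + q.2 ^ 2}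
          = ENNReal.ofReal (Real.exp (-((1 - t) / (2 * t)) * y ^ 2)) := by
      intro y
      have hc : (0:ℝ) ≤ (1 - t) * y ^ 2 / t :=
        div_nonneg (mul_nonneg (by linarith) (sq_nonneg y)) ht.le
      rw [prod_sq_ge hc]
      congr 2
      field_simp
    simp_rw [hcalc]
    rw [lint_exp (div_nonneg (by linarith) (by linarith))]
    congr 1
    rw [show 2 * ((1 - t) / (2 * t)) + 1 = t⁻¹ by field_simp; ring, Real.sqrt_inv, inv_inv]
  -- RHS as a set-lintegral
  have hRHS : ∀ s : Set ℝ, MeasurableSet s →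
      (((volume : Measure ℝ).restrict (Set.Ioc 0 1)).withDensity
        (fun u => ENNReal.ofReal (1 / (2 * Real.sqrt u)))) s
      = ∫⁻ u in s ∩ Set.Ioc 0 1, ENNReal.ofReal (1 / (2 * Real.sqrt u)) := by
    intro s hs
    rw [withDensity_apply _ hs, Measure.restrict_restrict hs]
  haveI : IsFiniteMeasure (((volume : Measure ℝ).restrict (Set.Ioc 0 1)).withDensity
      (fun u => ENNReal.ofReal (1 / (2 * Real.sqrt u)))) := by
    constructor
    rw [hRHS _ MeasurableSet.univ, Set.univ_inter, rhs_key one_pos]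
    simp
  haveI : IsProbabilityMeasure (μ3.map
      (fun x => (x 0) ^ 2 / ((x 0) ^ 2 + (x 1) ^ 2 + (x 2) ^ 2))) :=
    Measure.isProbabilityMeasure_map hf.aemeasurable
  refine Measure.ext_of_Iic _ _ (fun t => ?_)
  rw [Measure.map_apply hf measurableSet_Iic, hRHS _ measurableSet_Iic]
  rcases lt_or_ge t 0 with ht | ht
  · have h1 : (fun x : Fin 3 → ℝ => (x 0) ^ 2 / ((x 0) ^ 2 + (x 1) ^ 2 + (x 2) ^ 2)) ⁻¹'
        Set.Iic t = ∅ := by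
      ext x
      simp only [Set.mem_preimage, Set.mem_Iic, Set.mem_empty_iff_false, iff_false, not_le]
      have h0 : (0:ℝ) ≤ (x 0) ^ 2 / ((x 0) ^ 2 + (x 1) ^ 2 + (x 2) ^ 2) := by positivity
      linarith
    have h2 : Set.Iic t ∩ Set.Ioc 0 1 = ∅ := by
      ext u
      simp only [Set.mem_inter_iff, Set.mem_Iic, Set.mem_Ioc, Set.mem_empty_iff_false, iff_false,
        not_and, and_imp]
      intro hu h0u
      linarith
    rw [h1, h2]
    simp
  · rcases eq_or_lt_of_le ht with ht0 | htpos
    · -- t = 0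
      have h1 : (fun x : Fin 3 → ℝ => (x 0) ^ 2 / ((x 0) ^ 2 + (x 1) ^ 2 + (x 2) ^ 2)) ⁻¹'
          Set.Iic t = (fun x : Fin 3 → ℝ => (x 0, (x 1, x 2))) ⁻¹'
            (({0} : Set ℝ) ×ˢ (Set.univ : Set (ℝ × ℝ))) := by
        ext x
        simp only [Set.mem_preimage, Set.mem_Iic, Set.mem_prod, Set.mem_singleton_iff,
          Set.mem_univ, and_true, ← ht0]
        have hS : 0 ≤ (x 0) ^ 2 + (x 1) ^ 2 + (x 2) ^ 2 := by positivity
        constructor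
        · intro h
          have h0 : (0:ℝ) ≤ (x 0) ^ 2 / ((x 0) ^ 2 + (x 1) ^ 2 + (x 2) ^ 2) := by positivity
          have heq0 : (x 0) ^ 2 / ((x 0) ^ 2 + (x 1) ^ 2 + (x 2) ^ 2) = 0 := le_antisymm h h0
          rcases div_eq_zero_iff.mp heq0 with h' | h'
          · exact pow_eq_zero_iff (by norm_num) |>.mp h'
          · nlinarith [sq_nonneg (x 0), sq_nonneg (x 1), sq_nonneg (x 2)]
        · intro h
          rw [h]
          simp
      rw [h1, hmp.measure_preimage (((measurableSet_singleton (0:ℝ)).prod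
        MeasurableSet.univ).nullMeasurableSet), Measure.prod_prod]
      have hsing : gaussianReal 0 1 ({0} : Set ℝ) = 0 :=
        gaussianReal_absolutelyContinuous 0 one_ne_zero Real.volume_singleton
      rw [hsing, zero_mul]
      have h2 : Set.Iic t ∩ Set.Ioc 0 1 = ∅ := by
        ext u
        simp only [Set.mem_inter_iff, Set.mem_Iic, Set.mem_Ioc, Set.mem_empty_iff_false, iff_false,
          not_and, and_imp]
        intro hu h0u
        linarith
      rw [h2]
      simp
    · rcases le_or_gt t 1 with ht1 | ht1
      · -- main case
        have h2 : Set.Iic t ∩ Set.Ioc 0 1 = Set.Ioc 0 t := by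
          ext u
          simp only [Set.mem_inter_iff, Set.mem_Iic, Set.mem_Ioc]
          constructor
          · rintro ⟨h1, h2, h3⟩; exact ⟨h2, h1⟩
          · rintro ⟨h1, h2⟩; exact ⟨h2, h1, h2.trans ht1⟩
        rw [h2, rhs_key htpos, ← hIic t htpos ht1]
        rfl
      · -- t > 1
        have h1 : (fun x : Fin 3 → ℝ => (x 0) ^ 2 / ((x 0) ^ 2 + (x 1) ^ 2 + (x 2) ^ 2)) ⁻¹'
            Set.Iic t = Set.univ := by
          ext x
          simp only [Set.mem_preimage, Set.mem_Iic, Set.mem_univ, iff_true]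
          have hS : 0 ≤ (x 0) ^ 2 + (x 1) ^ 2 + (x 2) ^ 2 := by positivity
          have hle : (x 0) ^ 2 / ((x 0) ^ 2 + (x 1) ^ 2 + (x 2) ^ 2) ≤ 1 :=
            div_le_one_of_le₀ (by nlinarith [sq_nonneg (x 1), sq_nonneg (x 2)]) hS
          linarith
        have h2 : Set.Iic t ∩ Set.Ioc 0 1 = Set.Ioc 0 1 := by
          rw [Set.inter_eq_right]
          intro u hu
          exact hu.2.trans (le_of_lt ht1)
        rw [h1, h2, rhs_key one_pos]
        haveI : IsProbabilityMeasure μ3 := by infer_instance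
        simp [measure_univ]
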